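/- Let (R, m) be a commutative noetherian local ring, I an ideal of R and M an R-module. Then the following are equivalent: (i) I•M = γ_I(M); (ii) every R-linear map f : I → M has image contained in I•M; (iii) the map Hom_R(I, M) → Hom_R(I, M/IM) given by post-composition with the quotient map M → M/IM is the zero map. Moreover, if I is a principal ideal, these are further equivalent to (iv) I•M = { x ∈ M : Ann_R(I)•x = 0 }. -/

import Mathlib

/-- The sup of ranges of maps `I →ₗ M` always contains `I • M`. -/
theorem iExcellent_key {R : Type u} [CommRing R] (I : Ideal R) (M : Type v) [AddCommGroup M]
    [Module R M] :
    I • (⊤ : Submodule R M) ≤ ⨆ f : I →ₗ[R] M, LinearMap.range f := by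
  rw [Submodule.smul_le]
  intro a ha m _
  exact le_iSup (fun f : I →ₗ[R] M => LinearMap.range f)
    (LinearMap.toSpanSingleton R M m ∘ₗ I.subtype) ⟨⟨a, ha⟩, rfl⟩

/-- For a principal ideal, the sup of ranges equals the annihilator torsion. -/
theorem iExcellent_sup_eq {R : Type u} [CommRing R] (c : R) (M : Type v) [AddCommGroup M]
    [Module R M] :
    (⨆ f : Ideal.span {c} →ₗ[R] M, LinearMap.range f) =
      Submodule.torsionBySet R M (Submodule.annihilator (Ideal.span {c})) := by
  apply le_antisymm
  · refine iSup_le fun f => ?_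
    rintro _ ⟨y, rfl⟩
    rw [Submodule.mem_torsionBySet_iff]
    rintro ⟨a, ha⟩
    have hy : a • y = 0 := by
      ext
      exact Submodule.mem_annihilator.mp ha _ y.2
    rw [← map_smul, hy, map_zero]
  · intro x hx
    rw [Submodule.mem_torsionBySet_iff] at hx
    -- build the map span{c} → M sending c to x
    set cI : Ideal.span ({c} : Set R) := ⟨c, Ideal.subset_span rfl⟩ with hcI
    set π : R →ₗ[R] Ideal.span ({c} : Set R) := LinearMap.toSpanSingleton R _ cI with hπ
    have hπsurj : Function.Surjective π := by
      rintro ⟨y, hy⟩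
      obtain ⟨r, hr⟩ := Ideal.mem_span_singleton'.mp hy
      exact ⟨r, by ext; simpa [π, cI, LinearMap.toSpanSingleton_apply, smul_eq_mul] using hr⟩
    have hker : LinearMap.ker π ≤ LinearMap.ker (LinearMap.toSpanSingleton R M x) := by
      intro r hr
      have hrc : r * c = 0 := by
        have := congrArg Subtype.val hr
        simpa [π, cI, LinearMap.toSpanSingleton_apply, smul_eq_mul] using this
      have hann : r ∈ Submodule.annihilator (Ideal.span {c}) := by
        rw [Submodule.mem_annihilator]
        intro n hn
        obtain ⟨s, hs⟩ := Ideal.mem_span_singleton'.mp hn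
        rw [← hs, smul_eq_mul]
        calc r * (s * c) = s * (r * c) := by ring
          _ = 0 := by rw [hrc, mul_zero]
      simpa [LinearMap.mem_ker, LinearMap.toSpanSingleton_apply] using hx ⟨r, hann⟩
    set e : (R ⧸ LinearMap.ker π) ≃ₗ[R] Ideal.span ({c} : Set R) :=
      π.quotKerEquivOfSurjective hπsurj with he
    set g : (R ⧸ LinearMap.ker π) →ₗ[R] M :=
      Submodule.liftQ _ (LinearMap.toSpanSingleton R M x) hker with hg
    refine le_iSup (fun f : Ideal.span {c} →ₗ[R] M => LinearMap.range f)
      (g ∘ₗ e.symm.toLinearMap) ?_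
    show x ∈ LinearMap.range (g ∘ₗ e.symm.toLinearMap)
    rw [LinearMap.range_comp_of_range_eq_top _ (LinearEquiv.range e.symm)]
    exact ⟨Submodule.Quotient.mk 1, by
      rw [hg, Submodule.liftQ_apply, LinearMap.toSpanSingleton_apply, one_smul]⟩

theorem iExcellent_tfae {R : Type u} [CommRing R] [IsNoetherianRing R] [IsLocalRing R]
    (I : Ideal R) (M : Type v) [AddCommGroup M] [Module R M] :
    (List.TFAE
      [I • (⊤ : Submodule R M) = ⨆ f : I →ₗ[R] M, LinearMap.range f,
       ∀ f : I →ₗ[R] M, LinearMap.range f ≤ I • (⊤ : Submodule R M),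
       ∀ f : I →ₗ[R] M, (I • (⊤ : Submodule R M)).mkQ.comp f = 0]) ∧
    ((∃ c : R, I = Ideal.span {c}) →
      ((I • (⊤ : Submodule R M) = ⨆ f : I →ₗ[R] M, LinearMap.range f) ↔
        I • (⊤ : Submodule R M) = Submodule.torsionBySet R M (Submodule.annihilator I))) := by
  constructor
  · tfae_have 1 ↔ 2
    · constructor
      · intro h f
        rw [h]
        exact le_iSup (fun f : I →ₗ[R] M => LinearMap.range f) f
      · intro h
        exact le_antisymm (iExcellent_key I M) (iSup_le h)
    tfae_have 2 ↔ 3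
    · refine forall_congr' fun f => ?_
      rw [← LinearMap.range_le_ker_iff, Submodule.ker_mkQ]
    tfae_finish
  · rintro ⟨c, rfl⟩
    rw [iExcellent_sup_eq]
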